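/- arXiv:1704.05912 — 3 statements merged into one kernel-verified Lean document; each statement's English description precedes it below -/
import Mathlib

section
/- At the disease-free steady state, the inequality λ₀(λ + η M⁰) > η α S_n⁰ holds; equivalently, h_o > (1/2)(1 - (λλ₀ + ηω₀)/(ηα)). -/
/-- λ₀(λ + η M⁰) > η α S_n⁰; equivalently h_o > (1/2)(1 - (λλ₀+ηω₀)/(ηα)). -/
theorem stmt4 (lam lam0 eta alpha omega0 : ℝ)
    (hlam : 0 < lam) (hlam0 : 0 < lam0) (heta : 0 < eta) (halpha : 0 < alpha)
    (homega0 : 0 < omega0)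
    (h_o Sn0 M0 : ℝ)
    (hdef : h_o = (1/2) * (1 - (lam * lam0 + eta * omega0) / (eta * alpha))
      + Real.sqrt ((1/4) * (1 - (lam * lam0 + eta * omega0) / (eta * alpha))^2
          + omega0 / alpha))
    (hSn : Sn0 = 1 - h_o)
    (hM : M0 = (omega0 + alpha * h_o) / lam0) :
    lam0 * (lam + eta * M0) > eta * alpha * Sn0 ∧
      h_o > (1/2) * (1 - (lam * lam0 + eta * omega0) / (eta * alpha)) := by
  set b := (1/2) * (1 - (lam * lam0 + eta * omega0) / (eta * alpha)) with hb
  have hkey : h_o > b := by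
    have h1 : (1/4) * (1 - (lam * lam0 + eta * omega0) / (eta * alpha))^2 = b^2 := by
      rw [hb]; ring
    have h2 : Real.sqrt (b^2 + omega0 / alpha) > 0 := by
      have hpos : 0 < omega0 / alpha := div_pos homega0 halpha
      apply Real.sqrt_pos.mpr; nlinarith [sq_nonneg b]
    rw [hdef, h1]; linarith
  refine ⟨?_, hkey⟩
  rw [hSn, hM]
  have hea : 0 < eta * alpha := mul_pos heta halpha
  have hb' : b = (1/2) * (1 - (lam * lam0 + eta * omega0) / (eta * alpha)) := hb
  have := hkey
  rw [hb'] at this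
  have hfrac : lam0 * (lam + eta * ((omega0 + alpha * h_o) / lam0))
      = lam * lam0 + eta * omega0 + eta * alpha * h_o := by
    field_simp; ring
  rw [hfrac]
  have h3 : (lam * lam0 + eta * omega0) / (eta * alpha) * (eta * alpha)
      = lam * lam0 + eta * omega0 := div_mul_cancel₀ _ hea.ne'
  nlinarith [mul_lt_mul_of_pos_right this hea]
end

section
/- Suppose k = iμ with μ real satisfies k² + k(λ₀ + λ + a₆) + λ₀(λ + a₆) = α a₄ e^{−kτ} for some τ ≥ 0, where λ, λ₀, a₆, α, a₄ are positive with λ₀(λ + a₆) > α a₄. Then μ does not exist; i.e., the transcendental characteristic equation has no purely imaginary roots. -/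
/-- the transcendental characteristic equation
k² + k(λ₀+λ+a₆) + λ₀(λ+a₆) = αa₄e^{−kτ} has no purely imaginary roots
k = iμ, provided λ₀(λ+a₆) > αa₄ with all parameters positive and τ ≥ 0. -/
theorem stmt8 (lam lam0 eta alpha a4 a6 τ : ℝ)
    (hlam : 0 < lam) (hlam0 : 0 < lam0) (halpha : 0 < alpha)
    (ha4 : 0 < a4) (ha6 : 0 < a6) (hτ : 0 ≤ τ)
    (hgt : lam0 * (lam + a6) > alpha * a4) :
    ¬ ∃ μ : ℝ, (Complex.I * μ)^2 + (Complex.I * μ) * ((lam0 : ℂ) + lam + a6)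
        + (lam0 : ℂ) * ((lam : ℂ) + a6)
        = (alpha : ℂ) * (a4 : ℂ) * Complex.exp (-(Complex.I * μ) * τ) := by
  rintro ⟨μ, h⟩
  have hrw : -(Complex.I * μ) * τ = ((-(μ*τ) : ℝ) : ℂ) * Complex.I := by
    push_cast; ring
  rw [hrw, Complex.exp_mul_I] at h
  rw [Complex.ext_iff] at h
  obtain ⟨h1, h2⟩ := h
  simp [Complex.add_re, Complex.add_im, Complex.mul_re, Complex.mul_im, mul_pow,
    Complex.I_sq, ← Complex.ofReal_mul, Complex.cos_ofReal_re, Complex.sin_ofReal_re,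
    Complex.cos_ofReal_im, Complex.sin_ofReal_im, ← Complex.ofReal_pow,
    Complex.ofReal_re, Complex.ofReal_im] at h1 h2
  have hc := Real.sin_sq_add_cos_sq (μ*τ)
  have hsq : (-μ^2 + lam0*(lam+a6))^2 + (μ*(lam0+lam+a6))^2 = (alpha*a4)^2 := by
    rw [h1, h2]; nlinarith [hc]
  nlinarith [hsq, sq_nonneg (μ^2), sq_nonneg (μ*lam0), sq_nonneg (μ*(lam+a6)),
    mul_pos halpha ha4, hgt]
end

section
/- If λλ₀ > α a₄, a₁ ≥ a₃ > 0, a₃(a₁+a₅+a₆) − a₁a₅ > 0, and λ₀, r, p, α, a₄ > 0, then λ₀g₃ − α a₃ a₄ > 0, where g₃ = [a₃(a₁+a₅+a₆) − a₁a₅] + rp(a₁ − a₃) + a₁λ. Explicitly: λ₀g₃ − αa₃a₄ = λ₀[a₃(a₁+a₅+a₆) − a₁a₅] + (λ₀rp + αa₄)(a₁ − a₃) + a₁(λλ₀ − αa₄) > 0. -/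
/-- the third Routh–Hurwitz condition λ₀g₃ − αa₃a₄ > 0, together
with its explicit decomposition. -/
theorem stmt13 (lam lam0 r p alpha a1 a3 a4 a5 a6 : ℝ)
    (hlam0 : 0 < lam0) (hr : 0 < r) (hp : 0 < p) (halpha : 0 < alpha)
    (ha3 : 0 < a3) (ha4 : 0 < a4) (h13 : a1 ≥ a3)
    (hll : lam * lam0 > alpha * a4)
    (hpos : a3 * (a1 + a5 + a6) - a1 * a5 > 0)
    (g3 : ℝ)
    (hg3 : g3 = (a3 * (a1 + a5 + a6) - a1 * a5) + r * p * (a1 - a3) + a1 * lam) :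
    lam0 * g3 - alpha * a3 * a4
      = lam0 * (a3 * (a1 + a5 + a6) - a1 * a5)
        + (lam0 * r * p + alpha * a4) * (a1 - a3)
        + a1 * (lam * lam0 - alpha * a4) ∧
    lam0 * g3 - alpha * a3 * a4 > 0 := by
  subst hg3
  constructor
  · ring
  · nlinarith [mul_pos hlam0 hpos, mul_nonneg (mul_pos halpha ha4).le (sub_nonneg.mpr h13), mul_pos (lt_of_lt_of_le ha3 h13) (sub_pos.mpr hll), mul_nonneg (mul_pos (mul_pos hlam0 hr) hp).le (sub_nonneg.mpr h13)]
end
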